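/- Let σ be a partition of the set of all primes and G a finite group. If A is a σ-subnormal subgroup of G and A is a Hall Π-subgroup of G for some non-empty subset Π of σ, then A is normal in G. -/

import Mathlib

open Subgroup Pointwise

/-- `σ` is a partition of the set of all primes: every member of every block is prime,
and every prime lies in exactly one block. -/
def IsPrimePartition {ι : Type*} (σ : ι → Set ℕ) : Prop :=
  (∀ i, ∀ p ∈ σ i, Nat.Prime p) ∧ ∀ p : ℕ, Nat.Prime p → ∃! i, p ∈ σ i

/-- `σ(m)`: the set of indices `i` such that `σ i` contains a prime divisor of `m`. -/
def sigmaClasses {ι : Type*} (σ : ι → Set ℕ) (m : ℕ) : Set ι :=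
  {i | ∃ p ∈ σ i, Nat.Prime p ∧ p ∣ m}

/-- A group of order `m` is `σ`-primary iff `m = 1` or `|σ(m)| = 1`. -/
def IsSigmaPrimary {ι : Type*} (σ : ι → Set ℕ) (m : ℕ) : Prop :=
  m = 1 ∨ (sigmaClasses σ m).ncard = 1

/-- `m` is a `Π`-number: every prime divisor of `m` lies in some block belonging to `Π`. -/
def IsPiNumber {ι : Type*} (σ : ι → Set ℕ) (Pi : Set ι) (m : ℕ) : Prop :=
  ∀ p : ℕ, Nat.Prime p → p ∣ m → ∃ i ∈ Pi, p ∈ σ i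

/-- `H` is a Hall `Π`-subgroup of `G`: `|H|` is a `Π`-number and `|G : H|` is a `Π'`-number. -/
def IsHallPiSubgroup {ι : Type*} (σ : ι → Set ℕ) (Pi : Set ι) {G : Type*} [Group G]
    (H : Subgroup G) : Prop :=
  IsPiNumber σ Pi (Nat.card H) ∧ IsPiNumber σ Piᶜ H.index

/-- `A` is `σ`-subnormal in `G`. -/
def IsSigmaSubnormal {ι : Type*} (σ : ι → Set ℕ) {G : Type*} [Group G] (A : Subgroup G) : Prop :=
  ∃ (t : ℕ) (c : Fin (t + 1) → Subgroup G), Monotone c ∧ c 0 = A ∧ c (Fin.last t) = ⊤ ∧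
    ∀ i : Fin t, ((c i.castSucc).subgroupOf (c i.succ)).Normal ∨
      IsSigmaPrimary σ
        (Nat.card (↥(c i.succ) ⧸ ((c i.castSucc).subgroupOf (c i.succ)).normalCore))

/-- `M/N` is a chief factor of `G`. -/
def IsChiefFactor {G : Type*} [Group G] (N M : Subgroup G) : Prop :=
  N.Normal ∧ M.Normal ∧ N < M ∧
    ∀ K : Subgroup G, K.Normal → N ≤ K → K ≤ M → K = N ∨ K = M

/-- `G` is `σ`-soluble: every chief factor of `G` is `σ`-primary. -/
def IsSigmaSoluble {ι : Type*} (σ : ι → Set ℕ) (G : Type*) [Group G] : Prop :=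
  ∀ N M : Subgroup G, IsChiefFactor N M →
    IsSigmaPrimary σ (Nat.card (↥M ⧸ N.subgroupOf M))

/-- `A` is an `n`-maximal subgroup of `G`. -/
def IsNMaximal {G : Type*} [Group G] (n : ℕ) (A : Subgroup G) : Prop :=
  ∃ c : Fin (n + 1) → Subgroup G, Monotone c ∧ c 0 = A ∧ c (Fin.last n) = ⊤ ∧
    ∀ i : Fin n, IsCoatom ((c i.castSucc).subgroupOf (c i.succ))

/-- `A` is subnormal in `G`. -/
def IsSubnormalSubgroup {G : Type*} [Group G] (A : Subgroup G) : Prop :=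
  ∃ (t : ℕ) (c : Fin (t + 1) → Subgroup G), Monotone c ∧ c 0 = A ∧ c (Fin.last t) = ⊤ ∧
    ∀ i : Fin t, ((c i.castSucc).subgroupOf (c i.succ)).Normal

/-- `S` is a complete Hall `σ`-set of `G`. -/
def IsCompleteHallSigmaSet {ι : Type*} (σ : ι → Set ℕ) {G : Type*} [Group G]
    (S : Set (Subgroup G)) : Prop :=
  (∀ H ∈ S, H ≠ ⊥ → ∃ i ∈ sigmaClasses σ (Nat.card G), IsHallPiSubgroup σ {i} H) ∧
  ∀ i ∈ sigmaClasses σ (Nat.card G), ∃! H, H ∈ S ∧ IsHallPiSubgroup σ {i} H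

/-- `G` is `σ`-dispersive. -/
def IsSigmaDispersive {ι : Type*} (σ : ι → Set ℕ) (G : Type*) [Group G] : Prop :=
  ∃ (t : ℕ) (c : Fin (t + 1) → Subgroup G) (H : Fin t → Subgroup G),
    StrictMono c ∧ c 0 = ⊥ ∧ c (Fin.last t) = ⊤ ∧ (∀ i, (c i).Normal) ∧
    IsCompleteHallSigmaSet σ (Set.range H) ∧
    ∀ i : Fin t, (c i.castSucc : Set G) * (H i : Set G) = (c i.succ : Set G)


/-- If `A` is `σ`-subnormal in `G` and `A` is a Hall `Π`-subgroup of `G` for some non-empty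
`Π ⊆ σ`, then `A` is normal in `G`. -/

private lemma pi_coprime' {ι : Type*} {σ : ι → Set ℕ} (hσ : IsPrimePartition σ) {Pi : Set ι}
    {m m' : ℕ} (hm : IsPiNumber σ Pi m) (hm' : IsPiNumber σ Piᶜ m') : Nat.Coprime m m' := by
  rw [Nat.Coprime]
  by_contra h
  obtain ⟨p, hp, hpd⟩ := Nat.exists_prime_and_dvd h
  obtain ⟨i, hi, hpi⟩ := hm p hp (hpd.trans (Nat.gcd_dvd_left m m'))
  obtain ⟨j, hj, hpj⟩ := hm' p hp (hpd.trans (Nat.gcd_dvd_right m m'))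
  obtain ⟨k, _, huniq⟩ := hσ.2 p hp
  have hij : i = j := (huniq i hpi).trans (huniq j hpj).symm
  exact hj (hij ▸ hi)

private lemma le_of_coprime_of_le_normalizer' {G : Type*} [Group G] [Finite G]
    {A B : Subgroup G} (hB : B ≤ (normalizer (A : Set G)))
    (hcop : Nat.Coprime (Nat.card B) A.index) : B ≤ A := by
  have h1 : A.relIndex B ∣ Nat.card B := Subgroup.index_dvd_card (A.subgroupOf B)
  have h2 : A.relIndex B ∣ A.index := by
    have h3 : (A.subgroupOf (normalizer (A : Set G))).relIndex (B.subgroupOf (normalizer (A : Set G))) ∣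
        (A.subgroupOf (normalizer (A : Set G))).index := Subgroup.relIndex_dvd_index_of_normal ..
    rw [Subgroup.relIndex_subgroupOf hB] at h3
    exact h3.trans (Subgroup.relIndex_dvd_index_of_le Subgroup.le_normalizer)
  exact Subgroup.relIndex_eq_one.mp (Nat.dvd_one.mp (hcop ▸ Nat.dvd_gcd h1 h2))

private lemma step_normalizer' {G : Type*} [Group G] [Finite G] {A M D : Subgroup G}
    (hM : M ≤ (normalizer (A : Set G)))
    (hconj : ∀ g ∈ D, ∀ a ∈ A, g * a * g⁻¹ ∈ M)
    (hcop : Nat.Coprime (Nat.card A) A.index) : D ≤ (normalizer (A : Set G)) := by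
  have key : ∀ x ∈ D, ∀ a ∈ A, x * a * x⁻¹ ∈ A := by
    intro x hx a ha
    set B := A.map (MulAut.conj x).toMonoidHom with hBdef
    have hinj : Function.Injective (MulAut.conj x).toMonoidHom :=
      (MulAut.conj x).injective
    have hBcard : Nat.card B = Nat.card A :=
      (Nat.card_congr (A.equivMapOfInjective _ hinj).toEquiv).symm
    have hBM : B ≤ (normalizer (A : Set G)) := by
      refine le_trans ?_ hM
      rintro y ⟨b, hb, rfl⟩
      simpa [MulAut.conj_apply] using hconj x hx b hb
    have hBA : B ≤ A := le_of_coprime_of_le_normalizer' hBM (hBcard ▸ hcop)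
    exact hBA ⟨a, ha, by simp [MulAut.conj_apply]⟩
  intro g hg
  rw [Subgroup.mem_normalizer_iff]
  intro h
  constructor
  · exact fun hh => key g hg h hh
  · intro hh
    have h2 := key g⁻¹ (inv_mem hg) _ hh
    have : g⁻¹ * (g * h * g⁻¹) * g⁻¹⁻¹ = h := by group
    rwa [this] at h2


theorem sigmaSubnormal_hall_normal
    {ι : Type*} (σ : ι → Set ℕ) (hσ : IsPrimePartition σ) (Pi : Set ι) (hPi : Pi.Nonempty)
    (G : Type*) [Group G] [Finite G] (A : Subgroup G)
    (hA : IsSigmaSubnormal σ A) (hHall : IsHallPiSubgroup σ Pi A) :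
    A.Normal := by
  obtain ⟨hcardA, hindexA⟩ := hHall
  have hcop : Nat.Coprime (Nat.card A) A.index := pi_coprime' hσ hcardA hindexA
  obtain ⟨t, c, hmono, hc0, hlast, hstep⟩ := hA
  have main : ∀ i : Fin (t + 1), c i ≤ (normalizer (A : Set G)) := by
    intro i
    induction i using Fin.induction with
    | zero => rw [hc0]; exact Subgroup.le_normalizer
    | succ i ih =>
      have hKD : c i.castSucc ≤ c i.succ := hmono (Fin.castSucc_lt_succ (i := i)).le
      have hAK : A ≤ c i.castSucc := hc0 ▸ hmono (Fin.zero_le _)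
      have hAD : A ≤ c i.succ := hAK.trans hKD
      rcases hstep i with hnorm | hprim
      · -- c i.castSucc is normal in c i.succ
        refine step_normalizer' ih ?_ hcop
        intro g hg a ha
        have hmem : (⟨a, hKD (hAK ha)⟩ : c i.succ) ∈
            (c i.castSucc).subgroupOf (c i.succ) := by
          rw [Subgroup.mem_subgroupOf]; exact hAK ha
        have h2 := hnorm.conj_mem _ hmem ⟨g, hg⟩
        rw [Subgroup.mem_subgroupOf] at h2
        simpa using h2
      · -- σ-primary case
        set N' := ((c i.castSucc).subgroupOf (c i.succ)).normalCore with hN'def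
        set N : Subgroup G := N'.map (c i.succ).subtype with hNdef
        have hND : N ≤ c i.succ := Subgroup.map_subtype_le N'
        have hNK : N ≤ c i.castSucc := by
          rintro x ⟨y, hy, rfl⟩
          exact Subgroup.mem_subgroupOf.mp
            (((c i.castSucc).subgroupOf (c i.succ)).normalCore_le hy)
        have hNconj : ∀ g ∈ c i.succ, ∀ x ∈ N, g * x * g⁻¹ ∈ N := by
          intro g hg x hx
          obtain ⟨y, hy, rfl⟩ := hx
          have h3 := (Subgroup.normalCore_normal _).conj_mem y hy ⟨g, hg⟩
          exact ⟨_, h3, rfl⟩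
        have hNsub : N.subgroupOf (c i.succ) = N' :=
          Subgroup.comap_map_eq_self_of_injective (c i.succ).subtype_injective N'
        have hNrel : N.relIndex (c i.succ) =
            Nat.card (↥(c i.succ) ⧸ ((c i.castSucc).subgroupOf (c i.succ)).normalCore) := by
          rw [Subgroup.relIndex, hNsub]
          rfl
        set n := Nat.card (↥(c i.succ) ⧸
          ((c i.castSucc).subgroupOf (c i.succ)).normalCore) with hndef
        have hpi_or : IsPiNumber σ Pi n ∨ IsPiNumber σ Piᶜ n := by
          rcases hprim with h1 | h1
          · left
            intro p hp hpd
            rw [h1, Nat.dvd_one] at hpd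
            exact absurd hpd hp.ne_one
          · obtain ⟨j, hj⟩ := Set.ncard_eq_one.mp h1
            have hall : ∀ p : ℕ, p.Prime → p ∣ n → p ∈ σ j := by
              intro p hp hpd
              obtain ⟨k, hk, _⟩ := hσ.2 p hp
              have hkmem : k ∈ sigmaClasses σ n := ⟨p, hk, hp, hpd⟩
              rw [hj, Set.mem_singleton_iff] at hkmem
              rwa [hkmem] at hk
            by_cases hjPi : j ∈ Pi
            · exact Or.inl fun p hp hpd => ⟨j, hjPi, hall p hp hpd⟩
            · exact Or.inr fun p hp hpd => ⟨j, hjPi, hall p hp hpd⟩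
        rcases hpi_or with hn | hn
        · -- n is a Π-number : c i.succ ≤ N ⊔ A ≤ c i.castSucc
          have hx1 : (N ⊔ A).relIndex (c i.succ) ∣ n := by
            rw [← hNrel]
            exact dvd_of_mul_left_eq _
              (Subgroup.relIndex_mul_relIndex N (N ⊔ A) (c i.succ)
                le_sup_left (sup_le hND hAD))
          have hx2 : (N ⊔ A).relIndex (c i.succ) ∣ A.index := by
            have h4 : (N ⊔ A).relIndex (c i.succ) ∣ A.relIndex (c i.succ) :=
              dvd_of_mul_left_eq _
                (Subgroup.relIndex_mul_relIndex A (N ⊔ A) (c i.succ)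
                  le_sup_right (sup_le hND hAD))
            exact h4.trans (Subgroup.relIndex_dvd_index_of_le hAD)
          have hcopn : Nat.Coprime n A.index := pi_coprime' hσ hn hindexA
          have h5 : (N ⊔ A).relIndex (c i.succ) = 1 :=
            Nat.dvd_one.mp (hcopn ▸ Nat.dvd_gcd hx1 hx2)
          exact (Subgroup.relIndex_eq_one.mp h5).trans ((sup_le hNK hAK).trans ih)
        · -- n is a Π'-number : A ≤ N
          have hrelNA : N.relIndex A ∣ n := by
            have h3 : N'.relIndex (A.subgroupOf (c i.succ)) ∣ N'.index :=
              Subgroup.relIndex_dvd_index_of_normal ..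
            rw [← hNsub, Subgroup.relIndex_subgroupOf hAD] at h3
            exact h3.trans (by rw [hNsub]; exact dvd_refl _)
          have hrelcard : N.relIndex A ∣ Nat.card A :=
            Subgroup.index_dvd_card (N.subgroupOf A)
          have hcopn : Nat.Coprime (Nat.card A) n := pi_coprime' hσ hcardA hn
          have hANle : A ≤ N := Subgroup.relIndex_eq_one.mp
            (Nat.dvd_one.mp (hcopn ▸ Nat.dvd_gcd hrelcard hrelNA))
          refine step_normalizer' (hNK.trans ih) ?_ hcop
          intro g hg a ha
          exact hNconj g hg a (hANle ha)
  have hfin := main (Fin.last t)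
  rw [hlast] at hfin
  exact Subgroup.normalizer_eq_top_iff.mp (top_le_iff.mp hfin)
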